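/- Let A ∈ ℝ^{m×m} be positive definite, meaning xᵀAx > 0 for every nonzero x ∈ ℝ^m (A need not be symmetric), let B ∈ ℝ^{m×n} have full column rank (rank B = n), and let α ≥ 0, β > 0. If λ ∈ ℂ and w = (u, v) ∈ ℂ^{m+n} is nonzero with Q(α,β)w = λ P(α,β)w and the second block component vanishes, v = 0, then |λ| < 1. -/

import Mathlib

open Matrix

/-- The MGSSP splitting matrix `P(α,β) = [[αI+2A, 2B], [−2Bᵀ, βI]]`. -/
noncomputable def Pmat {m n : ℕ} (A : Matrix (Fin m) (Fin m) ℝ) (B : Matrix (Fin m) (Fin n) ℝ)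
    (α β : ℝ) : Matrix (Fin m ⊕ Fin n) (Fin m ⊕ Fin n) ℝ :=
  fromBlocks (α • 1 + (2 : ℝ) • A) ((2 : ℝ) • B) (-((2 : ℝ) • Bᵀ)) (β • 1)

/-- The MGSSP splitting matrix `Q(α,β) = [[αI+A, B], [−Bᵀ, βI]]`. -/
noncomputable def Qmat {m n : ℕ} (A : Matrix (Fin m) (Fin m) ℝ) (B : Matrix (Fin m) (Fin n) ℝ)
    (α β : ℝ) : Matrix (Fin m ⊕ Fin n) (Fin m ⊕ Fin n) ℝ :=
  fromBlocks (α • 1 + A) B (-Bᵀ) (β • 1)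


private lemma quad_re_pos {m : ℕ} (A : Matrix (Fin m) (Fin m) ℝ)
    (hA : ∀ x : Fin m → ℝ, x ≠ 0 → 0 < x ⬝ᵥ (A *ᵥ x))
    (u : Fin m → ℂ) (hu : u ≠ 0) :
    0 < (star u ⬝ᵥ ((A.map Complex.ofReal) *ᵥ u)).re := by
  have hA' : ∀ x : Fin m → ℝ, 0 ≤ x ⬝ᵥ (A *ᵥ x) := by
    intro x
    by_cases hx : x = 0
    · simp [hx]
    · exact (hA x hx).le
  set x : Fin m → ℝ := fun i => (u i).re with hx
  set y : Fin m → ℝ := fun i => (u i).im with hy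
  have hre : (star u ⬝ᵥ ((A.map Complex.ofReal) *ᵥ u)).re
      = x ⬝ᵥ (A *ᵥ x) + y ⬝ᵥ (A *ᵥ y) := by
    simp only [dotProduct, mulVec, Matrix.map_apply, Pi.star_apply, Complex.re_sum,
      Finset.mul_sum, Finset.sum_mul, Complex.mul_re, Complex.mul_im, Complex.star_def,
      Complex.conj_re, Complex.conj_im, Complex.ofReal_re, Complex.ofReal_im]
    rw [← Finset.sum_add_distrib]
    refine Finset.sum_congr rfl fun i _ => ?_
    rw [← Finset.sum_add_distrib]
    refine Finset.sum_congr rfl fun j _ => ?_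
    ring
  rw [hre]
  rcases (show x ≠ 0 ∨ y ≠ 0 by
    by_contra h
    push_neg at h
    apply hu
    funext i
    exact Complex.ext (by simpa using congrFun h.1 i) (by simpa using congrFun h.2 i)) with h | h
  · have := hA x h; have := hA' y; linarith
  · have := hA y h; have := hA' x; linarith

/-- Lemma 3.3 (second part): if the second block component of an eigenvector of the
MGSSP iteration matrix vanishes, then the corresponding eigenvalue has modulus less
than one. -/
theorem mgssp_eigenvalue_abs_lt_one_of_second_block_zero {m n : ℕ}
    (A : Matrix (Fin m) (Fin m) ℝ) (B : Matrix (Fin m) (Fin n) ℝ)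
    (hA : ∀ x : Fin m → ℝ, x ≠ 0 → 0 < x ⬝ᵥ (A *ᵥ x))
    (hB : B.rank = n)
    (α β : ℝ) (hα : 0 ≤ α) (hβ : 0 < β)
    (lam : ℂ) (u : Fin m → ℂ) (v : Fin n → ℂ) (hw : Sum.elim u v ≠ 0)
    (heig : (Qmat A B α β).map Complex.ofReal *ᵥ Sum.elim u v
        = lam • ((Pmat A B α β).map Complex.ofReal *ᵥ Sum.elim u v))
    (hv : v = 0) :
    ‖lam‖ < 1 := by
  subst hv
  have hu : u ≠ 0 := by
    intro h
    apply hw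
    funext i
    cases i <;> simp [h]
  -- top block equation
  have h1 : ∀ i, (((α • 1 + A).map Complex.ofReal) *ᵥ u) i
      = lam * ((((α • 1 + (2:ℝ) • A).map Complex.ofReal) *ᵥ u) i) := by
    intro i
    have := congrFun heig (Sum.inl i)
    simpa [Qmat, Pmat, fromBlocks_map, fromBlocks_mulVec, mulVec, dotProduct] using this
  set A' := A.map Complex.ofReal with hA'def
  set c : ℂ := star u ⬝ᵥ (A' *ᵥ u) with hc
  set t : ℝ := ∑ i, Complex.normSq (u i) with ht
  have ht0 : 0 ≤ t := Finset.sum_nonneg fun i _ => Complex.normSq_nonneg _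
  have hcre : 0 < c.re := quad_re_pos A hA u hu
  have hsu : star u ⬝ᵥ u = (t : ℂ) := by
    simp only [dotProduct, Pi.star_apply, Complex.star_def, ht]
    push_cast
    refine Finset.sum_congr rfl fun i _ => ?_
    rw [Complex.normSq_eq_conj_mul_self]
  -- dot with star u
  have hdot1 : star u ⬝ᵥ (((α • 1 + A).map Complex.ofReal) *ᵥ u)
      = (α : ℂ) * t + c := by
    have hmap : ((α • (1:Matrix (Fin m) (Fin m) ℝ) + A).map Complex.ofReal)
        = (α : ℂ) • 1 + A' := by
      ext i j
      simp [Matrix.map_apply, Matrix.one_apply, apply_ite, hA'def]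
    rw [hmap, add_mulVec, Matrix.smul_mulVec, one_mulVec, dotProduct_add,
      dotProduct_smul, hsu, hc]
    simp [smul_eq_mul]
  have hdot2 : star u ⬝ᵥ (((α • 1 + (2:ℝ) • A).map Complex.ofReal) *ᵥ u)
      = (α : ℂ) * t + 2 * c := by
    have hmap : ((α • (1:Matrix (Fin m) (Fin m) ℝ) + (2:ℝ) • A).map Complex.ofReal)
        = (α : ℂ) • 1 + (2 : ℂ) • A' := by
      ext i j
      simp [Matrix.map_apply, Matrix.one_apply, apply_ite, hA'def]
    rw [hmap, add_mulVec, Matrix.smul_mulVec, Matrix.smul_mulVec, one_mulVec,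
      dotProduct_add, dotProduct_smul, dotProduct_smul, hsu, hc]
    simp [smul_eq_mul]
    try ring
  have key : (α : ℂ) * t + c = lam * ((α : ℂ) * t + 2 * c) := by
    rw [← hdot1, ← hdot2]
    simp only [dotProduct, Finset.mul_sum]
    exact Finset.sum_congr rfl fun i _ => by rw [h1 i]; ring
  set den : ℂ := (α : ℂ) * t + 2 * c with hden
  set num : ℂ := (α : ℂ) * t + c with hnum
  have hdre : den.re = α * t + 2 * c.re := by simp [hden]
  have hdim : den.im = 2 * c.im := by simp [hden]
  have hnre : num.re = α * t + c.re := by simp [hnum]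
  have hnim : num.im = c.im := by simp [hnum]
  have hαt : 0 ≤ α * t := mul_nonneg hα ht0
  have hden0 : den ≠ 0 := by
    intro h
    have := congrArg Complex.re h
    rw [hdre] at this
    simp at this
    linarith
  have hlam : lam = num / den := by
    field_simp
    linear_combination -key
  have hns : Complex.normSq num < Complex.normSq den := by
    rw [Complex.normSq_apply, Complex.normSq_apply, hdre, hdim, hnre, hnim]
    nlinarith [hcre, hαt]
  have habs : ‖num‖ < ‖den‖ := by
    have := Real.sqrt_lt_sqrt (Complex.normSq_nonneg num) hns
    simpa [Complex.norm_def] using this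
  rw [hlam, norm_div]
  rw [div_lt_one (norm_pos_iff.mpr hden0)]
  exact habs
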